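/- Let A = KQ/I be an acyclic string algebra. Then there exists a coloring c of the quiver Q such that the induced ideal I_c is contained in I. In particular, any acyclic string algebra is a quotient of an acyclic gentle algebra with the same quiver. -/

import Mathlib

/- ------------------------------------------------------------------
  Common framework: quivers, matrix representation varieties with the
  Zariski topology, the base-change group action, (semi-)stability,
  Schur modules, direct sums, moduli spaces as topological GIT
  quotients, semi-invariants, normality via coordinate rings, and the
  tame / Schur-tame / strictly wild conditions.
------------------------------------------------------------------ -/

namespace ModuliPaper

/-- A finite quiver: vertices `V`, arrows `Ar`, tail `s` and head `t`. -/
structure Quiv where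
  V : Type
  Ar : Type
  [fintV : Fintype V]
  [decV : DecidableEq V]
  [fintA : Fintype Ar]
  [decA : DecidableEq Ar]
  s : Ar → V
  t : Ar → V

attribute [instance] Quiv.fintV Quiv.decV Quiv.fintA Quiv.decA

variable (K : Type) [Field K]

/-- Affine space over `K`, carrying the Zariski topology (below). -/
def AffSp (ι : Type) : Type := ι → K

/-- The Zariski topology on affine space: the basic open sets are the
complements of hypersurfaces. -/
noncomputable instance AffSp.topologicalSpace (ι : Type) : TopologicalSpace (AffSp K ι) :=
  TopologicalSpace.generateFrom
    {U | ∃ p : MvPolynomial ι K, U = {x : AffSp K ι | MvPolynomial.eval x p ≠ 0}}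

/-- A point of the representation space of the quiver `Q` with dimension
vector `d`: a matrix for every arrow. -/
structure Rep (Q : Quiv) (d : Q.V → ℕ) where
  mat : ∀ a : Q.Ar, Matrix (Fin (d (Q.t a))) (Fin (d (Q.s a))) K

/-- The coordinates of the representation space. -/
def CoordIdx (Q : Quiv) (d : Q.V → ℕ) : Type :=
  Σ a : Q.Ar, Fin (d (Q.t a)) × Fin (d (Q.s a))

def Rep.coords {Q : Quiv} {d : Q.V → ℕ} (M : Rep K Q d) : AffSp K (CoordIdx Q d) :=
  fun c => M.mat c.1 c.2.1 c.2.2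

/-- The Zariski topology on the representation space. -/
noncomputable instance Rep.topologicalSpace (Q : Quiv) (d : Q.V → ℕ) :
    TopologicalSpace (Rep K Q d) :=
  TopologicalSpace.induced (Rep.coords K) inferInstance

/-- The base change group `GL(d) = ∏ₓ GL(d(x),K)` (as a family of invertible
matrices) acting by simultaneous conjugation. -/
def glAct {Q : Quiv} {d : Q.V → ℕ}
    (g : ∀ x : Q.V, Matrix.GeneralLinearGroup (Fin (d x)) K) (M : Rep K Q d) :
    Rep K Q d :=
  ⟨fun a => (g (Q.t a) : Matrix (Fin (d (Q.t a))) (Fin (d (Q.t a))) K) * M.mat a *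
    (((g (Q.s a))⁻¹ : Matrix.GeneralLinearGroup (Fin (d (Q.s a))) K) :
      Matrix (Fin (d (Q.s a))) (Fin (d (Q.s a))) K)⟩

/-- Two points are isomorphic as modules iff they lie in the same `GL(d)`-orbit. -/
def Iso {Q : Quiv} {d : Q.V → ℕ} (M N : Rep K Q d) : Prop :=
  ∃ g, glAct K g M = N

/-- The `GL(d)`-orbit of a point of the representation space. -/
def glOrbit {Q : Quiv} {d : Q.V → ℕ} (M : Rep K Q d) : Set (Rep K Q d) :=
  {N | Iso K M N}

def IsGLInvariant {Q : Quiv} {d : Q.V → ℕ} (C : Set (Rep K Q d)) : Prop :=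
  ∀ g M, M ∈ C → glAct K g M ∈ C

/-- `C` is the closure of a single `GL(d)`-orbit. -/
def IsOrbitClosure {Q : Quiv} {d : Q.V → ℕ} (C : Set (Rep K Q d)) : Prop :=
  ∃ M : Rep K Q d, C = closure (glOrbit K M)

/-- Paths in a quiver, via Mathlib's `Quiver.Path`. -/
instance quivQuiver (Q : Quiv) : Quiver Q.V :=
  ⟨fun x y => {a : Q.Ar // Q.s a = x ∧ Q.t a = y}⟩

/-- The linear map attached to an arrow by a representation. -/
def arrowEval {Q : Quiv} {d : Q.V → ℕ} (M : Rep K Q d) {x y : Q.V} (e : x ⟶ y) :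
    (Fin (d x) → K) →ₗ[K] (Fin (d y) → K) := by
  obtain ⟨a, rfl, rfl⟩ := e
  exact (M.mat a).mulVecLin

/-- The linear map attached to a path by a representation. -/
def pathEval {Q : Quiv} {d : Q.V → ℕ} (M : Rep K Q d) :
    {x y : Q.V} → Quiver.Path x y → ((Fin (d x) → K) →ₗ[K] (Fin (d y) → K))
  | _, _, Quiver.Path.nil => LinearMap.id
  | _, _, Quiver.Path.cons p e => (arrowEval K M e).comp (pathEval M p)

/-- The evaluation of a K-linear combination of parallel paths (an element of the
path algebra) on a representation. -/
noncomputable def relEval {Q : Quiv} {d : Q.V → ℕ} (M : Rep K Q d) {x y : Q.V}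
    (r : Quiver.Path x y →₀ K) : (Fin (d x) → K) →ₗ[K] (Fin (d y) → K) :=
  r.sum fun p c => c • pathEval K M p

/-- A set of relations for a quiver: admissible elements of the path algebra. -/
structure RelSet (Q : Quiv) where
  rels : Set (Σ x y : Q.V, (Quiver.Path x y →₀ K))

/-- The module variety `mod(A,d)` of the bound quiver algebra `A = KQ/I`,
`I = ⟨rels⟩`: the locus where all relations vanish. -/
noncomputable def modVar {Q : Quiv} (R : RelSet K Q) (d : Q.V → ℕ) : Set (Rep K Q d) :=
  {M | ∀ r ∈ R.rels, relEval K M r.2.2 = 0}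

/-- `Q` has no oriented cycles. -/
def Quiv.IsAcyclic (Q : Quiv) : Prop :=
  ∀ (x : Q.V) (p : Quiver.Path x x), p = Quiver.Path.nil

/-- Admissibility of the ideal of relations, encoded semantically:
every relation lies in (the span of paths of) length `≥ 2`, and some power of the
arrow ideal is contained in the ideal of relations (i.e. sufficiently long paths
act by `0` on every module of the algebra). -/
noncomputable def RelSet.IsAdmissible {Q : Quiv} (R : RelSet K Q) : Prop :=
  (∀ r ∈ R.rels, ∀ p ∈ (r.2.2).support, 2 ≤ p.length) ∧
  ∃ L : ℕ, ∀ (d : Q.V → ℕ), ∀ M ∈ modVar K R d, ∀ (x y : Q.V) (p : Quiver.Path x y),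
    L ≤ p.length → pathEval K M p = 0

/-- A subrepresentation (= submodule) of a representation. -/
structure SubRep {Q : Quiv} {d : Q.V → ℕ} (M : Rep K Q d) where
  space : ∀ x : Q.V, Submodule K (Fin (d x) → K)
  stable : ∀ a : Q.Ar, ∀ v ∈ space (Q.s a), (M.mat a).mulVec v ∈ space (Q.t a)

/-- The dimension vector of a subrepresentation. -/
noncomputable def SubRep.dimVec {Q : Quiv} {d : Q.V → ℕ} {M : Rep K Q d}
    (W : SubRep K M) : Q.V → ℕ :=
  fun x => Module.finrank K (W.space x)

/-- The pairing `θ(e) = ∑ₓ θ(x) e(x)` of a weight with a dimension vector. -/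
def wt {Q : Quiv} (θ : Q.V → ℤ) (e : Q.V → ℕ) : ℤ := ∑ x : Q.V, θ x * (e x : ℤ)

/-- King's θ-semi-stability. -/
def IsSemiStable {Q : Quiv} {d : Q.V → ℕ} (θ : Q.V → ℤ) (M : Rep K Q d) : Prop :=
  wt θ d = 0 ∧ ∀ W : SubRep K M, wt θ (W.dimVec K) ≤ 0

/-- King's θ-stability. -/
def IsStable {Q : Quiv} {d : Q.V → ℕ} (θ : Q.V → ℤ) (M : Rep K Q d) : Prop :=
  d ≠ 0 ∧ wt θ d = 0 ∧
    ∀ W : SubRep K M, W.dimVec K ≠ 0 → W.dimVec K ≠ d → wt θ (W.dimVec K) < 0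

/-- Morphisms of representations. -/
def IsHom {Q : Quiv} {d d' : Q.V → ℕ} (M : Rep K Q d) (N : Rep K Q d')
    (φ : ∀ x : Q.V, Matrix (Fin (d' x)) (Fin (d x)) K) : Prop :=
  ∀ a : Q.Ar, φ (Q.t a) * M.mat a = N.mat a * φ (Q.s a)

/-- Endomorphisms of a representation. -/
def IsEndo {Q : Quiv} {d : Q.V → ℕ} (M : Rep K Q d)
    (φ : ∀ x : Q.V, Matrix (Fin (d x)) (Fin (d x)) K) : Prop :=
  IsHom K M M φ

/-- A Schur module: all endomorphisms are scalar, i.e. `End_A(M) ≅ K`. -/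
def IsSchur {Q : Quiv} {d : Q.V → ℕ} (M : Rep K Q d) : Prop :=
  ∀ φ, IsEndo K M φ → ∃ c : K, ∀ x : Q.V, φ x = c • (1 : Matrix (Fin (d x)) (Fin (d x)) K)

/-- The direct sum of two representations. -/
def dsum {Q : Quiv} {d₁ d₂ : Q.V → ℕ} (M : Rep K Q d₁) (N : Rep K Q d₂) :
    Rep K Q (d₁ + d₂) :=
  ⟨fun a => Matrix.reindex finSumFinEquiv finSumFinEquiv
    (Matrix.fromBlocks (M.mat a) 0 0 (N.mat a))⟩

/-- Transport of a representation along an equality of dimension vectors. -/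
def recast {Q : Quiv} {d d' : Q.V → ℕ} (h : d = d') (M : Rep K Q d) : Rep K Q d' :=
  h ▸ M

/-- The dimension vector of a list of representations. -/
def sumDim {Q : Quiv} : List (Σ e : Q.V → ℕ, Rep K Q e) → (Q.V → ℕ)
  | [] => 0
  | x :: L => x.1 + sumDim L

/-- The direct sum of a list of representations. -/
def listSum {Q : Quiv} : (L : List (Σ e : Q.V → ℕ, Rep K Q e)) → Rep K Q (sumDim K L)
  | [] => ⟨fun _ => 0⟩
  | x :: L => dsum K x.2 (listSum L)

/-- `M` is isomorphic to the direct sum of the members of the list `L`. -/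
def IsDirectSumOf {Q : Quiv} {d : Q.V → ℕ} (M : Rep K Q d)
    (L : List (Σ e : Q.V → ℕ, Rep K Q e)) : Prop :=
  ∃ h : sumDim K L = d, Iso K (recast K h (listSum K L)) M

/-- Indecomposability of a representation. -/
def Indec {Q : Quiv} {d : Q.V → ℕ} (M : Rep K Q d) : Prop :=
  d ≠ 0 ∧ ∀ (d₁ d₂ : Q.V → ℕ) (M₁ : Rep K Q d₁) (M₂ : Rep K Q d₂) (h : d₁ + d₂ = d),
    d₁ ≠ 0 → d₂ ≠ 0 → ¬ Iso K (recast K h (dsum K M₁ M₂)) M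

/-- An irreducible component of a (closed) subvariety `Z` of the representation
space: a maximal irreducible closed subset of `Z`. -/
def IsIrrComp {Q : Quiv} {d : Q.V → ℕ} (Z C : Set (Rep K Q d)) : Prop :=
  C ⊆ Z ∧ IsClosed C ∧ IsIrreducible C ∧
    ∀ D : Set (Rep K Q d), D ⊆ Z → IsClosed D → IsIrreducible D → C ⊆ D → C = D

/-- The θ-semi-stable locus of `C`. -/
def ssLocus {Q : Quiv} {d : Q.V → ℕ} (C : Set (Rep K Q d)) (θ : Q.V → ℤ) :
    Set (Rep K Q d) :=
  {M | M ∈ C ∧ IsSemiStable K θ M}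

/-- S-equivalence on the semistable locus: orbit closures meet inside the
semistable locus.  The GIT quotient identifies exactly S-equivalent points. -/
def SEquiv {Q : Quiv} {d : Q.V → ℕ} (C : Set (Rep K Q d)) (θ : Q.V → ℤ)
    (M N : ↥(ssLocus K C θ)) : Prop :=
  (closure (glOrbit K M.1) ∩ closure (glOrbit K N.1) ∩ ssLocus K C θ).Nonempty

/-- The moduli space `M(C)^{ss}_θ` of θ-semi-stable modules in `C`, realized
(as a topological space) as the quotient of the semistable locus of `C` by
S-equivalence; its points are the θ-polystable modules in `C`. -/
def ModuliSpace {Q : Quiv} {d : Q.V → ℕ} (C : Set (Rep K Q d)) (θ : Q.V → ℤ) : Type :=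
  Quot (SEquiv K C θ)

noncomputable instance {Q : Quiv} {d : Q.V → ℕ} (C : Set (Rep K Q d)) (θ : Q.V → ℤ) :
    TopologicalSpace (ModuliSpace K C θ) :=
  instTopologicalSpaceQuot

/-- The image of `C^{ss}_θ` in the moduli space of the ambient variety `Z`:
this is `M(C)^{ss}_θ` as a (closed) subvariety of `M(Z)^{ss}_θ`. -/
def moduliImage {Q : Quiv} {d : Q.V → ℕ} (Z C : Set (Rep K Q d)) (θ : Q.V → ℤ) :
    Set (ModuliSpace K Z θ) :=
  Quot.mk _ '' {M : ↥(ssLocus K Z θ) | M.1 ∈ C}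

/-- The `m`-th symmetric power of a topological space. -/
def SymPow (m : ℕ) (X : Type*) [TopologicalSpace X] : Type _ :=
  Quot (fun f g : Fin m → X => ∃ σ : Equiv.Perm (Fin m), f = g ∘ σ)

noncomputable instance (m : ℕ) (X : Type*) [TopologicalSpace X] :
    TopologicalSpace (SymPow m X) :=
  instTopologicalSpaceQuot

/-- Projective `m`-space over `K` with its Zariski topology (quotient of the
punctured affine cone). -/
def ProjSpace (m : ℕ) : Type :=
  Quot (fun v w : {x : AffSp K (Fin (m + 1)) // ∃ i, x i ≠ 0} =>
    ∃ c : K, c ≠ 0 ∧ ∀ i, w.1 i = c * v.1 i)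

noncomputable instance (m : ℕ) : TopologicalSpace (ProjSpace K m) :=
  instTopologicalSpaceQuot

/-- A product of projective spaces `ℙ^{m 0} × ⋯ × ℙ^{m (n-1)}` over `K`, with its
Zariski topology (quotient of a product of punctured affine cones, carrying the
Zariski topology of the total affine space). -/
def ProdProj (n : ℕ) (m : Fin n → ℕ) : Type :=
  Quot (fun v w : {x : AffSp K (Σ i : Fin n, Fin (m i + 1)) // ∀ i, ∃ j, x ⟨i, j⟩ ≠ 0} =>
    ∃ c : Fin n → K, (∀ i, c i ≠ 0) ∧ ∀ i j, w.1 ⟨i, j⟩ = c i * v.1 ⟨i, j⟩)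

noncomputable instance (n : ℕ) (m : Fin n → ℕ) : TopologicalSpace (ProdProj K n m) :=
  instTopologicalSpaceQuot

end ModuliPaper
namespace ModuliPaper

variable (K : Type) [Field K]

/- --------------------- semi-invariants --------------------- -/

/-- The value of the character `χ_θ` of `GL(d)` at `g`:
`χ_θ(g) = ∏ₓ det(g(x))^{θ(x)}`. -/
noncomputable def chiWt {Q : Quiv} {d : Q.V → ℕ} (θ : Q.V → ℤ)
    (g : ∀ x : Q.V, Matrix.GeneralLinearGroup (Fin (d x)) K) : K :=
  ∏ x : Q.V, ((g x : Matrix (Fin (d x)) (Fin (d x)) K).det) ^ (θ x)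

/-- A semi-invariant of weight `χ_θ` on `C`: a regular (polynomial) function on
`C` satisfying `f(g·M) = χ_θ(g)·f(M)`. -/
def IsSemiInvariant {Q : Quiv} {d : Q.V → ℕ} (C : Set (Rep K Q d)) (θ : Q.V → ℤ)
    (f : ↥C → K) : Prop :=
  (∃ p : MvPolynomial (CoordIdx Q d) K,
      ∀ M : ↥C, f M = MvPolynomial.eval (Rep.coords K M.1) p) ∧
  ∀ (g) (M : ↥C) (h : glAct K g M.1 ∈ C), f ⟨glAct K g M.1, h⟩ = chiWt K θ g * f M

/-- The space `SI(C)_θ` of semi-invariants of weight `χ_θ` on `C`. -/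
noncomputable def SIModule {Q : Quiv} {d : Q.V → ℕ} (C : Set (Rep K Q d))
    (θ : Q.V → ℤ) : Submodule K (↥C → K) where
  carrier := {f | IsSemiInvariant K C θ f}
  add_mem' := by
    rintro f₁ f₂ ⟨⟨p₁, hp₁⟩, hw₁⟩ ⟨⟨p₂, hp₂⟩, hw₂⟩
    refine ⟨⟨p₁ + p₂, fun M => ?_⟩, fun g M h => ?_⟩
    · simp [hp₁ M, hp₂ M]
    · have := hw₁ g M h; have := hw₂ g M h
      simp only [Pi.add_apply, *]; ring
  zero_mem' := ⟨⟨0, fun M => by simp⟩, fun g M h => by simp⟩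
  smul_mem' := by
    rintro c f ⟨⟨p, hp⟩, hw⟩
    refine ⟨⟨c • p, fun M => ?_⟩, fun g M h => ?_⟩
    · simp only [Pi.smul_apply, smul_eq_mul, hp M]; exact (MvPolynomial.smul_eval _ _ _).symm
    · have := hw g M h
      simp only [Pi.smul_apply, smul_eq_mul, *]; ring

/- --------------------- coordinate rings and normality --------------------- -/

/-- The vanishing ideal of a subset of the representation space. -/
noncomputable def vanishingIdeal {Q : Quiv} {d : Q.V → ℕ} (C : Set (Rep K Q d)) :
    Ideal (MvPolynomial (CoordIdx Q d) K) where
  carrier := {p | ∀ M ∈ C, MvPolynomial.eval (Rep.coords K M) p = 0}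
  add_mem' := by intro p q hp hq M hM; simp [hp M hM, hq M hM]
  zero_mem' := by intro M hM; simp
  smul_mem' := by intro c p hp M hM; simp [smul_eq_mul, hp M hM]

/-- The coordinate ring `K[C]` of a subvariety of the representation space. -/
noncomputable def coordRing {Q : Quiv} {d : Q.V → ℕ} (C : Set (Rep K Q d)) : Type :=
  MvPolynomial (CoordIdx Q d) K ⧸ vanishingIdeal K C

noncomputable instance {Q : Quiv} {d : Q.V → ℕ} (C : Set (Rep K Q d)) :
    CommRing (coordRing K C) :=
  Ideal.Quotient.commRing _

/-- Normality of a variety: its coordinate ring is an integrally closed domain. -/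
def IsNormalVar {Q : Quiv} {d : Q.V → ℕ} (C : Set (Rep K Q d)) : Prop :=
  IsDomain (coordRing K C) ∧ IsIntegrallyClosed (coordRing K C)

/- --------------------- gentle and string algebras --------------------- -/

/-- "at most one element" of a set. -/
def AtMostOne {α : Type*} (s : Set α) : Prop := ∀ a ∈ s, ∀ b ∈ s, a = b

/-- "at most two elements" of a set. -/
def AtMostTwo {α : Type*} (s : Set α) : Prop :=
  ∀ a ∈ s, ∀ b ∈ s, ∀ c ∈ s, a = b ∨ a = c ∨ b = c

/-- A set of monomial (length-two) relations: pairs `(a,b)` of composable arrows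
(`a` followed by `b`), generating the ideal `I = ⟨{ba : (a,b) ∈ R}⟩`. -/
structure PairRels (Q : Quiv) where
  R : Set (Q.Ar × Q.Ar)
  comp : ∀ p ∈ R, Q.t p.1 = Q.s p.2

/-- The module variety of the algebra `KQ/⟨R⟩` with length-two monomial
relations `R`: the locus where all composites `M(b)M(a)`, `(a,b) ∈ R`, vanish. -/
def pairModVar {Q : Quiv} (P : PairRels Q) (d : Q.V → ℕ) : Set (Rep K Q d) :=
  {M | ∀ a b, (hab : (a, b) ∈ P.R) →
    ∀ (i : Fin (d (Q.t b))) (j : Fin (d (Q.s a))),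
      ∑ k : Fin (d (Q.t a)),
        M.mat b i (finCongr (congrArg d (P.comp (a, b) hab)) k) * M.mat a k j = 0}

/-- The gentle conditions on a bound quiver `(Q, I)` with `I` generated by the
length-two paths in `R`. -/
def PairRels.IsGentle {Q : Quiv} (P : PairRels Q) : Prop :=
  (∀ x : Q.V, AtMostTwo {a | Q.s a = x} ∧ AtMostTwo {a | Q.t a = x}) ∧
  (∀ a : Q.Ar, AtMostOne {b | Q.t a = Q.s b ∧ (a, b) ∉ P.R} ∧
               AtMostOne {b | Q.t b = Q.s a ∧ (b, a) ∉ P.R}) ∧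
  (∀ a : Q.Ar, AtMostOne {b | (a, b) ∈ P.R} ∧ AtMostOne {b | (b, a) ∈ P.R})

/-- The length-two path `a`-then-`b` in `Q`. -/
def path2 {Q : Quiv} (a b : Q.Ar) (h : Q.t a = Q.s b) : Quiver.Path (Q.s a) (Q.t b) :=
  (Quiver.Path.nil.cons (⟨a, rfl, rfl⟩ : (Q.s a : Q.V) ⟶ Q.t a)).cons
    (⟨b, h.symm, rfl⟩ : (Q.t a : Q.V) ⟶ Q.t b)

/-- A set of monomial relations (paths of length `≥ 2`). -/
structure MonRels (Q : Quiv) where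
  R : Set (Σ x y : Q.V, Quiver.Path x y)
  len2 : ∀ r ∈ R, 2 ≤ r.2.2.length

/-- The module variety of the monomial algebra `KQ/⟨R⟩`. -/
def monModVar {Q : Quiv} (R : MonRels Q) (d : Q.V → ℕ) : Set (Rep K Q d) :=
  {M | ∀ r ∈ R.R, pathEval K M r.2.2 = 0}

/-- The length-two path `a`-then-`b` lies in the monomial ideal `⟨R⟩`. -/
def MonRels.pairIn {Q : Quiv} (R : MonRels Q) (a b : Q.Ar) : Prop :=
  ∃ h : Q.t a = Q.s b, (⟨Q.s a, Q.t b, path2 a b h⟩ : Σ x y : Q.V, Quiver.Path x y) ∈ R.R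

/-- The string algebra conditions on a monomial bound quiver `(Q, ⟨R⟩)`. -/
def MonRels.IsString {Q : Quiv} (R : MonRels Q) : Prop :=
  (∀ x : Q.V, AtMostTwo {a | Q.s a = x} ∧ AtMostTwo {a | Q.t a = x}) ∧
  (∀ a : Q.Ar, AtMostOne {b | Q.t a = Q.s b ∧ ¬ R.pairIn a b} ∧
               AtMostOne {b | Q.t b = Q.s a ∧ ¬ R.pairIn b a})

/-- A coloring of a quiver: a map on arrows whose fibres are directed paths. -/
structure Coloring (Q : Quiv) (S : Type) where
  c : Q.Ar → S
  isPath : ∀ s : S, ∃ L : List Q.Ar, L.Nodup ∧ (∀ a, a ∈ L ↔ c a = s) ∧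
    L.Chain' (fun a b => Q.t a = Q.s b)

/-- The set of length-two relations `I_c` induced by a coloring: all composable
pairs of arrows of the same color. -/
def colorRels {Q : Quiv} {S : Type} (col : Coloring Q S) : PairRels Q where
  R := {p | Q.t p.1 = Q.s p.2 ∧ col.c p.1 = col.c p.2}
  comp := fun _ hp => hp.1

/- --------------------- band modules (string algebras) --------------------- -/

/-- Over an acyclic string algebra, the indecomposable modules are string and
band modules (Butler–Ringel), and the band modules are exactly the
indecomposables `M` with `dim M = ∑ₐ rank M(a)`. -/
def IsBand {Q : Quiv} {d : Q.V → ℕ} (M : Rep K Q d) : Prop :=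
  Indec K M ∧ (∑ x : Q.V, d x) = ∑ a : Q.Ar, (M.mat a).rank

/-- `M` is (isomorphic to) a direct sum of band modules. -/
def IsSumOfBands {Q : Quiv} {d : Q.V → ℕ} (M : Rep K Q d) : Prop :=
  ∃ L : List (Σ e : Q.V → ℕ, Rep K Q e), (∀ p ∈ L, IsBand K p.2) ∧ IsDirectSumOf K M L

/-- A regular irreducible component: the generic module of `C` is a direct sum
of band modules. -/
def IsGenericallyBands {Q : Quiv} {d : Q.V → ℕ} (C : Set (Rep K Q d)) : Prop :=
  ∃ U : Set (Rep K Q d), IsOpen U ∧ (U ∩ C).Nonempty ∧ ∀ M ∈ U ∩ C, IsSumOfBands K M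

end ModuliPaper
namespace ModuliPaper

variable (K : Type) [Field K]

/- --------------------- tame and Schur-tame --------------------- -/

/-- A one-parameter algebraic family of `d`-dimensional representations defined
over a localization `K[t]_f` of `K[t]`: a free `K[t]_f`-module structure is
encoded by matrices of polynomials divided by a power of `f`. -/
structure ParamFamily (Q : Quiv) (d : Q.V → ℕ) where
  f : Polynomial K
  hf : f ≠ 0
  k : ℕ
  num : ∀ a : Q.Ar, Matrix (Fin (d (Q.t a))) (Fin (d (Q.s a))) (Polynomial K)

/-- The member of the family at the parameter `lam` (i.e. `T ⊗_{K[t]_f} K[t]/(t-lam)`). -/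
noncomputable def ParamFamily.evalAt {Q : Quiv} {d : Q.V → ℕ} (F : ParamFamily K Q d)
    (lam : K) : Rep K Q d :=
  ⟨fun a => Matrix.of fun i j =>
    Polynomial.eval lam (F.num a i j) / (Polynomial.eval lam F.f) ^ F.k⟩

/-- The algebra with module varieties `MV` is Schur-tame: for every dimension
vector `d` there are finitely many one-parameter families of `d`-dimensional
modules, each consisting of pairwise non-isomorphic Schur modules (a
Schur-embedding `T_i ⊗_{R_i} -`), such that every `d`-dimensional Schur module
— up to finitely many isomorphism classes — belongs to one of the families. -/
noncomputable def IsSchurTame {Q : Quiv} (MV : ∀ d : Q.V → ℕ, Set (Rep K Q d)) : Prop :=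
  ∀ d : Q.V → ℕ, ∃ (n : ℕ) (F : Fin n → ParamFamily K Q d),
    (∀ i lam, Polynomial.eval lam (F i).f ≠ 0 →
      (F i).evalAt K lam ∈ MV d ∧ IsSchur K ((F i).evalAt K lam)) ∧
    (∀ i lam₁ lam₂, Polynomial.eval lam₁ (F i).f ≠ 0 → Polynomial.eval lam₂ (F i).f ≠ 0 →
      Iso K ((F i).evalAt K lam₁) ((F i).evalAt K lam₂) → lam₁ = lam₂) ∧
    ∃ Exc : Set (Rep K Q d), Exc.Finite ∧
      ∀ M ∈ MV d, IsSchur K M →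
        (∃ i lam, Polynomial.eval lam (F i).f ≠ 0 ∧ Iso K M ((F i).evalAt K lam)) ∨
        (∃ E ∈ Exc, Iso K M E)

/-- The algebra with module varieties `MV` is tame: for every dimension vector
`d` there are finitely many one-parameter families of `d`-dimensional modules,
each consisting of pairwise non-isomorphic indecomposable modules (a
representation embedding `T_i ⊗_{R_i} -`), such that every `d`-dimensional
indecomposable module — up to finitely many isomorphism classes — belongs to
one of the families. -/
noncomputable def IsTame {Q : Quiv} (MV : ∀ d : Q.V → ℕ, Set (Rep K Q d)) : Prop :=
  ∀ d : Q.V → ℕ, ∃ (n : ℕ) (F : Fin n → ParamFamily K Q d),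
    (∀ i lam, Polynomial.eval lam (F i).f ≠ 0 →
      (F i).evalAt K lam ∈ MV d ∧ Indec K ((F i).evalAt K lam)) ∧
    (∀ i lam₁ lam₂, Polynomial.eval lam₁ (F i).f ≠ 0 → Polynomial.eval lam₂ (F i).f ≠ 0 →
      Iso K ((F i).evalAt K lam₁) ((F i).evalAt K lam₂) → lam₁ = lam₂) ∧
    ∃ Exc : Set (Rep K Q d), Exc.Finite ∧
      ∀ M ∈ MV d, Indec K M →
        (∃ i lam, Polynomial.eval lam (F i).f ≠ 0 ∧ Iso K M ((F i).evalAt K lam)) ∨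
        (∃ E ∈ Exc, Iso K M E)

/- --------------------- strictly wild algebras --------------------- -/

/-- The representation of `Q` of dimension vector `m • e` obtained from a
template `T` of matrices over the free algebra `K⟨x,y⟩` (encoding an
`A`-`K⟨x,y⟩`-bimodule free of finite rank over `K⟨x,y⟩`) by specializing
`(x,y)` to the pair of `m × m` matrices `(X,Y)`. -/
noncomputable def blockRep {Q : Quiv} (e : Q.V → ℕ) (m : ℕ)
    (T : ∀ a : Q.Ar, Matrix (Fin (e (Q.t a))) (Fin (e (Q.s a))) (FreeAlgebra K (Fin 2)))
    (X Y : Matrix (Fin m) (Fin m) K) : Rep K Q (fun x => e x * m) :=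
  ⟨fun a => Matrix.of fun i j =>
    (FreeAlgebra.lift K ![X, Y] (T a (finProdFinEquiv.symm i).1 (finProdFinEquiv.symm j).1))
      (finProdFinEquiv.symm i).2 (finProdFinEquiv.symm j).2⟩

/-- The block-diagonal family of matrices induced by an `m' × m` matrix `ψ`:
the image of a morphism of `K⟨x,y⟩`-modules under the functor `T ⊗ -`. -/
def blockify {Q : Quiv} (e : Q.V → ℕ) {m m' : ℕ} (ψ : Matrix (Fin m') (Fin m) K) :
    ∀ x : Q.V, Matrix (Fin (e x * m')) (Fin (e x * m)) K :=
  fun _ => Matrix.of fun i j =>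
    if (finProdFinEquiv.symm i).1 = (finProdFinEquiv.symm j).1 then
      ψ (finProdFinEquiv.symm i).2 (finProdFinEquiv.symm j).2
    else 0

/-- Strict wildness of the algebra with module varieties `MV`: there is an exact
`K`-linear functor `mod K⟨x,y⟩ → mod A`, given by tensoring with a bimodule
free of finite rank over `K⟨x,y⟩` (encoded by a template `T`), which is fully
faithful. -/
noncomputable def IsStrictlyWild {Q : Quiv} (MV : ∀ d : Q.V → ℕ, Set (Rep K Q d)) : Prop :=
  ∃ (e : Q.V → ℕ)
    (T : ∀ a : Q.Ar, Matrix (Fin (e (Q.t a))) (Fin (e (Q.s a))) (FreeAlgebra K (Fin 2))),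
    (∀ (m : ℕ) (X Y : Matrix (Fin m) (Fin m) K),
      blockRep K e m T X Y ∈ MV (fun x => e x * m)) ∧
    (∀ (m m' : ℕ) (X Y : Matrix (Fin m) (Fin m) K) (X' Y' : Matrix (Fin m') (Fin m') K),
      -- functoriality: morphisms of `K⟨x,y⟩`-modules map to morphisms
      (∀ ψ : Matrix (Fin m') (Fin m) K, ψ * X = X' * ψ → ψ * Y = Y' * ψ →
        IsHom K (blockRep K e m T X Y) (blockRep K e m' T X' Y') (blockify K e ψ)) ∧
      -- faithfulness
      (∀ ψ₁ ψ₂ : Matrix (Fin m') (Fin m) K, blockify (Q := Q) K e ψ₁ = blockify K e ψ₂ → ψ₁ = ψ₂) ∧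
      -- fullness
      (∀ φ, IsHom K (blockRep K e m T X Y) (blockRep K e m' T X' Y') φ →
        ∃ ψ : Matrix (Fin m') (Fin m) K, ψ * X = X' * ψ ∧ ψ * Y = Y' * ψ ∧ φ = blockify K e ψ))

/- --------------------- θ-stable decompositions --------------------- -/

/-- The list of representations `N i j`, `j < m i`, over the indices `i` with
`i < l`. -/
def famList {Q : Quiv} {nn : ℕ} (dd : Fin nn → Q.V → ℕ) (m : Fin nn → ℕ) (l : ℕ)
    (N : ∀ i : Fin nn, Fin (m i) → Rep K Q (dd i)) : List (Σ e : Q.V → ℕ, Rep K Q e) :=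
  ((List.finRange nn).filter (fun i : Fin nn => decide ((i : ℕ) < l))).flatMap
    (fun i : Fin nn => (List.finRange (m i)).map (fun j => ⟨dd i, N i j⟩))

/-- A θ-stable decomposition `C = m₀·C₀ ∔ m₁·C₁ ∔ ⋯`: for the generic module
`M ∈ C^{ss}_θ`, the associated θ-polystable module `gr_θ(M)` (the unique
polystable module in the closure of the orbit of `M` within the semistable
locus) is a direct sum of θ-stable modules, `m i` of which belong to `Cs i`. -/
def ThetaStableDecomp {Q : Quiv} {d : Q.V → ℕ} (C : Set (Rep K Q d)) (θ : Q.V → ℤ)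
    {nn : ℕ} (dd : Fin nn → Q.V → ℕ) (m : Fin nn → ℕ)
    (Cs : ∀ i, Set (Rep K Q (dd i))) : Prop :=
  ∃ U : Set (Rep K Q d), IsOpen U ∧ (U ∩ C).Nonempty ∧
    ∀ M ∈ U ∩ C, IsSemiStable K θ M ∧
      ∃ N : ∀ i, Fin (m i) → Rep K Q (dd i),
        (∀ i j, N i j ∈ Cs i ∧ IsStable K θ (N i j)) ∧
        ∃ P ∈ closure (glOrbit K M), IsSemiStable K θ P ∧
          IsDirectSumOf K P (famList K dd m nn N)

/-- The dimension vector `∑_{i < l} m i • dd i`. -/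
def belowDim {Q : Quiv} {nn : ℕ} (dd : Fin nn → Q.V → ℕ) (m : Fin nn → ℕ) (l : ℕ) :
    Q.V → ℕ :=
  fun x => ∑ i ∈ Finset.univ.filter (fun i : Fin nn => (i : ℕ) < l), m i * dd i x

/-- The direct sum locus `C₀^{⊕ m₀} ⊕ ⋯ ⊕ C_{l-1}^{⊕ m_{l-1}}`. -/
def sumLocusBelow {Q : Quiv} {nn : ℕ} (dd : Fin nn → Q.V → ℕ) (m : Fin nn → ℕ) (l : ℕ)
    (Cs : ∀ i, Set (Rep K Q (dd i))) : Set (Rep K Q (belowDim dd m l)) :=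
  {M | ∃ N : ∀ i, Fin (m i) → Rep K Q (dd i),
    (∀ (i : Fin nn) (j : Fin (m i)), (i : ℕ) < l → N i j ∈ Cs i) ∧ IsDirectSumOf K M (famList K dd m l N)}

/- --------------------- extensions --------------------- -/

/-- The extension of `N` by `M` (`0 → M → Z → N → 0`) determined by the blocks
`E`: `Z(a) = [[M(a), E(a)], [0, N(a)]]`. -/
def triSum {Q : Quiv} {d₁ d₂ : Q.V → ℕ} (M : Rep K Q d₁) (N : Rep K Q d₂)
    (E : ∀ a : Q.Ar, Matrix (Fin (d₁ (Q.t a))) (Fin (d₂ (Q.s a))) K) :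
    Rep K Q (d₁ + d₂) :=
  ⟨fun a => Matrix.reindex finSumFinEquiv finSumFinEquiv
    (Matrix.fromBlocks (M.mat a) (E a) 0 (N.mat a))⟩

/-- `ext¹_A(D, E) = 0`: the minimal dimension of `Ext¹_A(X,Y)` over
`(X,Y) ∈ D × E` vanishes, i.e. there is a pair `(X,Y) ∈ D × E` all of whose
extensions (inside the module variety `MV`) split. -/
def Ext1Vanishes {Q : Quiv} (MV : ∀ e : Q.V → ℕ, Set (Rep K Q e)) {dX dY : Q.V → ℕ}
    (D : Set (Rep K Q dX)) (E : Set (Rep K Q dY)) : Prop :=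
  ∃ X ∈ D, ∃ Y ∈ E, ∀ B, triSum K Y X B ∈ MV (dY + dX) →
    Iso K (triSum K Y X B) (dsum K Y X)

end ModuliPaper

namespace ModuliPaper

section StringGentle

variable (Q : Quiv)

/-- One-arrow relation on vertices. -/
def arel (x y : Q.V) : Prop := ∃ a : Q.Ar, Q.s a = x ∧ Q.t a = y

/-- Strict reachability relation on vertices. -/
def vrel : Q.V → Q.V → Prop := Relation.TransGen (arel Q)

lemma vrel_path {x y : Q.V} (h : vrel Q x y) : ∃ p : Quiver.Path x y, 0 < p.length := by
  induction h with
  | single h =>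
    obtain ⟨a, h1, h2⟩ := h
    exact ⟨Quiver.Path.nil.cons ⟨a, h1, h2⟩, Nat.zero_lt_one⟩
  | tail _ h2 ih =>
    obtain ⟨p, hp⟩ := ih
    obtain ⟨a, h1, h2'⟩ := h2
    exact ⟨p.cons ⟨a, h1, h2'⟩, Nat.succ_pos _⟩

lemma vrel_irrefl (hA : Q.IsAcyclic) (x : Q.V) : ¬ vrel Q x x := by
  intro h
  obtain ⟨p, hp⟩ := vrel_path Q h
  rw [hA x p] at hp
  simp at hp

lemma vrel_st (a : Q.Ar) : vrel Q (Q.s a) (Q.t a) :=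
  Relation.TransGen.single ⟨a, rfl, rfl⟩

/-- number of vertices strictly below `x`. -/
noncomputable def mdown (x : Q.V) : ℕ := Set.ncard {y | vrel Q y x}

/-- number of vertices strictly above `x`. -/
noncomputable def mup (x : Q.V) : ℕ := Set.ncard {y | vrel Q x y}

lemma mdown_lt (hI : ∀ z, ¬ vrel Q z z) {x y : Q.V} (h : vrel Q y x) :
    mdown Q y < mdown Q x := by
  apply Set.ncard_lt_ncard _ (Set.toFinite _)
  rw [Set.ssubset_def]
  exact ⟨fun z hz => hz.trans h, fun hsup => hI y (hsup h)⟩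

lemma mup_lt (hI : ∀ z, ¬ vrel Q z z) {x y : Q.V} (h : vrel Q x y) :
    mup Q y < mup Q x := by
  apply Set.ncard_lt_ncard _ (Set.toFinite _)
  rw [Set.ssubset_def]
  exact ⟨fun z hz => h.trans hz, fun hsup => hI y (hsup h)⟩

end StringGentle

end ModuliPaper
namespace ModuliPaper

section StringGentle

variable (Q : Quiv)

noncomputable def root (pred : Q.Ar → Option Q.Ar)
    (hpred : ∀ a b, pred a = some b → Q.t b = Q.s a)
    (hI : ∀ z, ¬ vrel Q z z) (a : Q.Ar) : Q.Ar :=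
  match h : pred a with
  | none => a
  | some b => root pred hpred hI b
termination_by mdown Q (Q.s a)
decreasing_by
  exact mdown_lt Q hI (Relation.TransGen.single ⟨b, rfl, hpred a b h⟩)

noncomputable def chainL (succ : Q.Ar → Option Q.Ar)
    (hsucc : ∀ a b, succ a = some b → Q.t a = Q.s b)
    (hI : ∀ z, ¬ vrel Q z z) (a : Q.Ar) : List Q.Ar :=
  a :: (match h : succ a with
  | none => []
  | some b => chainL succ hsucc hI b)
termination_by mup Q (Q.s a)
decreasing_by
  exact mup_lt Q hI (Relation.TransGen.single ⟨a, rfl, hsucc a b h⟩)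

variable (pred succ : Q.Ar → Option Q.Ar)
    (hpred : ∀ a b, pred a = some b → Q.t b = Q.s a)
    (hsucc : ∀ a b, succ a = some b → Q.t a = Q.s b)
    (hI : ∀ z, ¬ vrel Q z z)

lemma root_none {a : Q.Ar} (h : pred a = none) :
    root Q pred hpred hI a = a := by
  rw [root]; split <;> simp_all

lemma root_some {a b : Q.Ar} (h : pred a = some b) :
    root Q pred hpred hI a = root Q pred hpred hI b := by
  conv_lhs => rw [root]
  split <;> simp_all

lemma chainL_none {a : Q.Ar} (h : succ a = none) :
    chainL Q succ hsucc hI a = [a] := by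
  rw [chainL]; split <;> simp_all

lemma chainL_some {a b : Q.Ar} (h : succ a = some b) :
    chainL Q succ hsucc hI a = a :: chainL Q succ hsucc hI b := by
  conv_lhs => rw [chainL]
  split <;> simp_all

end StringGentle

end ModuliPaper
namespace ModuliPaper

section StringGentle

variable (Q : Quiv)
    (pred succ : Q.Ar → Option Q.Ar)
    (hpred : ∀ a b, pred a = some b → Q.t b = Q.s a)
    (hsucc : ∀ a b, succ a = some b → Q.t a = Q.s b)
    (hI : ∀ z, ¬ vrel Q z z)

lemma pred_root (a : Q.Ar) : pred (root Q pred hpred hI a) = none := by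
  induction a using root.induct Q pred hpred hI with
  | case1 a h => rw [root_none Q pred hpred hI h]; exact h
  | case2 a b h ih => rw [root_some Q pred hpred hI h]; exact ih

lemma chainL_head (a : Q.Ar) : ∃ l, chainL Q succ hsucc hI a = a :: l := by
  cases h : succ a with
  | none => exact ⟨[], chainL_none Q succ hsucc hI h⟩
  | some b => exact ⟨_, chainL_some Q succ hsucc hI h⟩

lemma self_mem_chainL (a : Q.Ar) : a ∈ chainL Q succ hsucc hI a := by
  obtain ⟨l, hl⟩ := chainL_head Q succ hsucc hI a
  rw [hl]; exact List.mem_cons_self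

lemma chain_mem_root (hsp : ∀ a b, succ a = some b ↔ pred b = some a)
    {a b : Q.Ar} (hb : b ∈ chainL Q succ hsucc hI a) :
    root Q pred hpred hI b = root Q pred hpred hI a := by
  induction a using chainL.induct Q succ hsucc hI with
  | case1 a ih =>
    cases h : succ a with
    | none =>
      rw [chainL_none Q succ hsucc hI h] at hb
      simp at hb; rw [hb]
    | some c =>
      rw [chainL_some Q succ hsucc hI h] at hb
      rcases List.mem_cons.mp hb with rfl | hb'
      · rfl
      · rw [ih c h hb', root_some Q pred hpred hI ((hsp a c).mp h)]

lemma mem_chain_succ {a b c : Q.Ar} (hb : b ∈ chainL Q succ hsucc hI a)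
    (hc : succ b = some c) : c ∈ chainL Q succ hsucc hI a := by
  induction a using chainL.induct Q succ hsucc hI with
  | case1 a ih =>
    cases h : succ a with
    | none =>
      rw [chainL_none Q succ hsucc hI h] at hb
      simp at hb; subst hb; rw [h] at hc; cases hc
    | some d =>
      rw [chainL_some Q succ hsucc hI h] at hb ⊢
      rcases List.mem_cons.mp hb with rfl | hb'
      · rw [h] at hc
        injection hc with hc; subst hc
        exact List.mem_cons_of_mem _ (self_mem_chainL Q succ hsucc hI _)
      · exact List.mem_cons_of_mem _ (ih d h hb')

lemma mem_chain_of_root (hsp : ∀ a b, succ a = some b ↔ pred b = some a)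
    {a s : Q.Ar} (h1 : root Q pred hpred hI a = s) (h2 : pred s = none) :
    a ∈ chainL Q succ hsucc hI s := by
  induction a using root.induct Q pred hpred hI with
  | case1 a h =>
    rw [root_none Q pred hpred hI h] at h1; subst h1
    exact self_mem_chainL Q succ hsucc hI a
  | case2 a b h ih =>
    rw [root_some Q pred hpred hI h] at h1
    exact mem_chain_succ Q succ hsucc hI (ih h1) ((hsp b a).mpr h)

lemma chain_vrel {a b : Q.Ar} (hb : b ∈ chainL Q succ hsucc hI a) :
    b = a ∨ vrel Q (Q.s a) (Q.s b) := by
  induction a using chainL.induct Q succ hsucc hI with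
  | case1 a ih =>
    cases h : succ a with
    | none =>
      rw [chainL_none Q succ hsucc hI h] at hb
      simp at hb; left; exact hb
    | some c =>
      rw [chainL_some Q succ hsucc hI h] at hb
      have hac : vrel Q (Q.s a) (Q.s c) :=
        Relation.TransGen.single ⟨a, rfl, hsucc a c h⟩
      rcases List.mem_cons.mp hb with rfl | hb'
      · left; rfl
      · rcases ih c h hb' with rfl | hv
        · right; exact hac
        · right; exact hac.trans hv

lemma chain_pairwise (a : Q.Ar) :
    (chainL Q succ hsucc hI a).Pairwise
      (fun u v => succ u = some v ∨ vrel Q (Q.t u) (Q.s v)) := by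
  induction a using chainL.induct Q succ hsucc hI with
  | case1 a ih =>
    cases h : succ a with
    | none => rw [chainL_none Q succ hsucc hI h]; simp
    | some c =>
      rw [chainL_some Q succ hsucc hI h]
      refine List.pairwise_cons.mpr ⟨fun v hv => ?_, ih c h⟩
      rcases chain_vrel Q succ hsucc hI hv with rfl | hvv
      · left; exact h
      · right; rw [hsucc a c h]; exact hvv

lemma chain_nodup (a : Q.Ar) : (chainL Q succ hsucc hI a).Nodup := by
  refine (chain_pairwise Q succ hsucc hI a).imp ?_
  rintro u v (h | h) rfl
  · exact hI (Q.s u) (Relation.TransGen.single ⟨u, rfl, hsucc u u h⟩)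
  · exact hI (Q.s u) ((vrel_st Q u).trans h)

lemma chain_chain' (a : Q.Ar) :
    (chainL Q succ hsucc hI a).Chain' (fun u v => Q.t u = Q.s v) := by
  induction a using chainL.induct Q succ hsucc hI with
  | case1 a ih =>
    cases h : succ a with
    | none => rw [chainL_none Q succ hsucc hI h]; exact List.isChain_singleton _
    | some c =>
      rw [chainL_some Q succ hsucc hI h]
      obtain ⟨l, hl⟩ := chainL_head Q succ hsucc hI c
      have := ih c h
      rw [hl] at this ⊢
      exact List.isChain_cons_cons.mpr ⟨hsucc a c h, this⟩

lemma chain_adj {r u v : Q.Ar} (hu : u ∈ chainL Q succ hsucc hI r)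
    (hv : v ∈ chainL Q succ hsucc hI r) (huv : Q.t u = Q.s v) :
    succ u = some v := by
  classical
  by_cases heq : u = v
  · subst heq
    exact absurd (Relation.TransGen.single ⟨u, rfl, huv⟩ : vrel Q (Q.s u) (Q.s u))
      (hI (Q.s u))
  · have hpw := (chain_pairwise Q succ hsucc hI r).imp
      (S := fun u v =>
        (succ u = some v ∨ vrel Q (Q.t u) (Q.s v)) ∨
        (succ v = some u ∨ vrel Q (Q.t v) (Q.s u)))
      (fun h => Or.inl h)
    letI : Std.Symm (fun u v =>
          (succ u = some v ∨ vrel Q (Q.t u) (Q.s v)) ∨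
          (succ v = some u ∨ vrel Q (Q.t v) (Q.s u))) := ⟨fun x y h => h.symm⟩
    have key := List.Pairwise.forall (l := chainL Q succ hsucc hI r)
      hpw hu hv heq
    rcases key with (h | h) | (h | h)
    · exact h
    · exact absurd (huv ▸ h) (hI (Q.s v))
    · have h1 : Q.t v = Q.s u := hsucc v u h
      exact absurd ((Relation.TransGen.single ⟨u, rfl, huv⟩ : vrel Q (Q.s u) (Q.s v)).trans
        (Relation.TransGen.single ⟨v, rfl, h1⟩)) (hI (Q.s u))
    · have hc : vrel Q (Q.s u) (Q.s u) :=
        ((Relation.TransGen.single ⟨u, rfl, huv⟩ : vrel Q (Q.s u) (Q.s v)).trans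
          (vrel_st Q v)).trans h
      exact absurd hc (hI (Q.s u))

end StringGentle

end ModuliPaper
namespace ModuliPaper

lemma exists_matching (Q : Quiv) (R : MonRels Q) (hs : R.IsString) (x : Q.V) :
    ∃ m : Q.Ar → Option Q.Ar,
      (∀ a b, Q.t a = x → m a = some b → Q.s b = x ∧ R.pairIn a b) ∧
      (∀ a₁ a₂ b, Q.t a₁ = x → Q.t a₂ = x → m a₁ = some b → m a₂ = some b → a₁ = a₂) ∧
      (∀ a, Q.t a = x → AtMostOne {b | Q.s b = x ∧ m a ≠ some b}) ∧
      (∀ b, Q.s b = x → AtMostOne {a | Q.t a = x ∧ m a ≠ some b}) := by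
  classical
  have F1 : ∀ a b₁ b₂, Q.t a = x → Q.s b₁ = x → Q.s b₂ = x → b₁ ≠ b₂ →
      R.pairIn a b₁ ∨ R.pairIn a b₂ := by
    intro a b₁ b₂ ha h1 h2 hne
    by_contra hcon
    push_neg at hcon
    exact hne ((hs.2 a).1 b₁ ⟨by rw [ha, h1], hcon.1⟩ b₂ ⟨by rw [ha, h2], hcon.2⟩)
  have F2 : ∀ b a₁ a₂, Q.s b = x → Q.t a₁ = x → Q.t a₂ = x → a₁ ≠ a₂ →
      R.pairIn a₁ b ∨ R.pairIn a₂ b := by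
    intro b a₁ a₂ hb h1 h2 hne
    by_contra hcon
    push_neg at hcon
    exact hne ((hs.2 b).2 a₁ ⟨by rw [hb, h1], hcon.1⟩ a₂ ⟨by rw [hb, h2], hcon.2⟩)
  have hT2Out := (hs.1 x).1
  have hT2In := (hs.1 x).2
  by_cases hOut2 : ∃ b₁ b₂, Q.s b₁ = x ∧ Q.s b₂ = x ∧ b₁ ≠ b₂
  · obtain ⟨b₁, b₂, hsb1, hsb2, hbne⟩ := hOut2
    by_cases hIn2 : ∃ a₁ a₂, Q.t a₁ = x ∧ Q.t a₂ = x ∧ a₁ ≠ a₂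
    · -- two in, two out
      obtain ⟨a₁, a₂, ht1, ht2, hane⟩ := hIn2
      have e1 := F1 a₁ b₁ b₂ ht1 hsb1 hsb2 hbne
      have e2 := F1 a₂ b₁ b₂ ht2 hsb1 hsb2 hbne
      have f1 := F2 b₁ a₁ a₂ hsb1 ht1 ht2 hane
      have f2 := F2 b₂ a₁ a₂ hsb2 ht1 ht2 hane
      obtain ⟨c₁, c₂, hc1, hc2, hcne, hp1, hp2⟩ :
          ∃ c₁ c₂, Q.s c₁ = x ∧ Q.s c₂ = x ∧ c₁ ≠ c₂ ∧ R.pairIn a₁ c₁ ∧ R.pairIn a₂ c₂ := by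
        by_cases h11 : R.pairIn a₁ b₁ ∧ R.pairIn a₂ b₂
        · exact ⟨b₁, b₂, hsb1, hsb2, hbne, h11.1, h11.2⟩
        · have hcr : R.pairIn a₁ b₂ ∧ R.pairIn a₂ b₁ := by tauto
          exact ⟨b₂, b₁, hsb2, hsb1, Ne.symm hbne, hcr.1, hcr.2⟩
      set m : Q.Ar → Option Q.Ar :=
        fun a => if a = a₁ then some c₁ else if a = a₂ then some c₂ else none with hmdef
      have hm1 : m a₁ = some c₁ := by simp [hmdef]
      have hm2 : m a₂ = some c₂ := by simp [hmdef, Ne.symm hane]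
      have hmval : ∀ a b, m a = some b → (a = a₁ ∧ b = c₁) ∨ (a = a₂ ∧ b = c₂) := by
        intro a b hm
        rw [hmdef] at hm
        dsimp only at hm
        split_ifs at hm with h1 h2
        · injection hm with hm; exact Or.inl ⟨h1, hm.symm⟩
        · injection hm with hm; exact Or.inr ⟨h2, hm.symm⟩
      refine ⟨m, ?_, ?_, ?_, ?_⟩
      · intro a b ha hm
        rcases hmval a b hm with ⟨rfl, rfl⟩ | ⟨rfl, rfl⟩
        · exact ⟨hc1, hp1⟩
        · exact ⟨hc2, hp2⟩
      · intro u v b hu hv hmu hmv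
        rcases hmval u b hmu with ⟨rfl, rfl⟩ | ⟨rfl, rfl⟩ <;>
          rcases hmval v b hmv with ⟨rfl, h⟩ | ⟨rfl, h⟩ <;>
          first
            | rfl
            | (exact absurd h hcne)
            | (exact absurd h.symm hcne)
            | (exact absurd h (Ne.symm hcne))
      · intro a ha u hu v hv
        obtain ⟨hu1, hu2⟩ := hu
        obtain ⟨hv1, hv2⟩ := hv
        obtain ⟨c, hmc, hcx⟩ : ∃ c, m a = some c ∧ Q.s c = x := by
          rcases hT2In a ha a₁ ht1 a₂ ht2 with h | h | h
          · exact ⟨c₁, by rw [h]; exact hm1, hc1⟩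
          · exact ⟨c₂, by rw [h]; exact hm2, hc2⟩
          · exact absurd h hane
        have hu' : u ≠ c := fun hh => hu2 (by rw [hh]; exact hmc)
        have hv' : v ≠ c := fun hh => hv2 (by rw [hh]; exact hmc)
        rcases hT2Out u hu1 v hv1 c hcx with h' | h' | h' <;> tauto
      · intro b hbx u hu v hv
        obtain ⟨hu1, hu2⟩ := hu
        obtain ⟨hv1, hv2⟩ := hv
        obtain ⟨c, hmc, hcx⟩ : ∃ c, m c = some b ∧ Q.t c = x := by
          rcases hT2Out b hbx c₁ hc1 c₂ hc2 with h | h | h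
          · exact ⟨a₁, by rw [h]; exact hm1, ht1⟩
          · exact ⟨a₂, by rw [h]; exact hm2, ht2⟩
          · exact absurd h hcne
        have hu' : u ≠ c := fun hh => hu2 (by rw [hh]; exact hmc)
        have hv' : v ≠ c := fun hh => hv2 (by rw [hh]; exact hmc)
        rcases hT2In u hu1 v hv1 c hcx with h' | h' | h' <;> tauto
    · -- at most one in, two out
      have hI1 : ∀ u v, Q.t u = x → Q.t v = x → u = v := by
        intro u v hu hv
        by_contra hne
        exact hIn2 ⟨u, v, hu, hv, hne⟩
      refine ⟨fun a => if h : Q.t a = x ∧ ∃ b, Q.s b = x ∧ R.pairIn a b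
          then some h.2.choose else none, ?_, ?_, ?_, ?_⟩
      · intro a b ha hm
        dsimp only at hm
        split_ifs at hm with hcond
        · injection hm with hm
          subst hm
          exact hcond.2.choose_spec
      · intro u v b hu hv _ _
        exact hI1 u v hu hv
      · intro a ha u hu v hv
        obtain ⟨hu1, hu2⟩ := hu
        obtain ⟨hv1, hv2⟩ := hv
        have hex : ∃ b, Q.s b = x ∧ R.pairIn a b := by
          rcases F1 a b₁ b₂ ha hsb1 hsb2 hbne with h | h
          · exact ⟨b₁, hsb1, h⟩
          · exact ⟨b₂, hsb2, h⟩
        have hma : (if h : Q.t a = x ∧ ∃ b, Q.s b = x ∧ R.pairIn a b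
            then some h.2.choose else none) = some hex.choose := dif_pos ⟨ha, hex⟩
        have hu' : u ≠ hex.choose := fun hh => hu2 (by rw [hh]; exact hma)
        have hv' : v ≠ hex.choose := fun hh => hv2 (by rw [hh]; exact hma)
        rcases hT2Out u hu1 v hv1 hex.choose hex.choose_spec.1 with h' | h' | h' <;> tauto
      · intro b hbx u hu v hv
        exact hI1 u v hu.1 hv.1
  · -- at most one out
    have hO1 : ∀ u v, Q.s u = x → Q.s v = x → u = v := by
      intro u v hu hv
      by_contra hne
      exact hOut2 ⟨u, v, hu, hv, hne⟩
    by_cases hIn2 : ∃ a₁ a₂, Q.t a₁ = x ∧ Q.t a₂ = x ∧ a₁ ≠ a₂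
    · obtain ⟨a₁, a₂, ht1, ht2, hane⟩ := hIn2
      by_cases hb : ∃ b, Q.s b = x
      · obtain ⟨b₀, hb₀⟩ := hb
        obtain ⟨astar, hta, hpa⟩ : ∃ a, Q.t a = x ∧ R.pairIn a b₀ := by
          rcases F2 b₀ a₁ a₂ hb₀ ht1 ht2 hane with h | h
          · exact ⟨a₁, ht1, h⟩
          · exact ⟨a₂, ht2, h⟩
        refine ⟨fun a => if a = astar then some b₀ else none, ?_, ?_, ?_, ?_⟩
        · intro a b ha hm
          dsimp only at hm
          split_ifs at hm with h1
          · injection hm with hm; subst hm; subst h1; exact ⟨hb₀, hpa⟩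
        · intro u v b hu hv hmu hmv
          dsimp only at hmu hmv
          split_ifs at hmu with hu1
          split_ifs at hmv with hv1
          rw [hu1, hv1]
        · intro a ha u hu v hv
          exact hO1 u v hu.1 hv.1
        · intro b hbx u hu v hv
          obtain ⟨hu1, hu2⟩ := hu
          obtain ⟨hv1, hv2⟩ := hv
          have hbb : b = b₀ := hO1 b b₀ hbx hb₀
          have hma : (if astar = astar then some b₀ else none) = some b := by
            rw [if_pos rfl, hbb]
          have hu' : u ≠ astar := fun hh => hu2 (by rw [hh]; exact hma)
          have hv' : v ≠ astar := fun hh => hv2 (by rw [hh]; exact hma)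
          rcases hT2In u hu1 v hv1 astar hta with h' | h' | h' <;> tauto
      · refine ⟨fun _ => none, ?_, ?_, ?_, ?_⟩
        · intro a b _ hm; cases hm
        · intro u v b _ _ hm _; cases hm
        · intro a ha u hu v hv
          exact absurd ⟨u, hu.1⟩ hb
        · intro b hbx u hu v hv
          exact absurd ⟨b, hbx⟩ hb
    · have hI1 : ∀ u v, Q.t u = x → Q.t v = x → u = v := by
        intro u v hu hv
        by_contra hne
        exact hIn2 ⟨u, v, hu, hv, hne⟩
      refine ⟨fun _ => none, ?_, ?_, ?_, ?_⟩
      · intro a b _ hm; cases hm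
      · intro u v b _ _ hm _; cases hm
      · intro a ha u hu v hv
        exact hO1 u v hu.1 hv.1
      · intro b hbx u hu v hv
        exact hI1 u v hu.1 hv.1

end ModuliPaper
namespace ModuliPaper

variable (K : Type) [Field K]

lemma arrowEval_apply (Q : Quiv) {d : Q.V → ℕ} (M : Rep K Q d) {x y : Q.V}
    (e : x ⟶ y) (v : Fin (d x) → K) (i : Fin (d y)) :
    arrowEval K M e v i =
      ∑ k : Fin (d x), M.mat e.1 ((finCongr (congrArg d e.2.2)).symm i)
        ((finCongr (congrArg d e.2.1)).symm k) * v k := by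
  obtain ⟨a, h1, h2⟩ := e
  subst h1; subst h2
  show (M.mat a).mulVecLin v i = _
  simp [Matrix.mulVecLin_apply, Matrix.mulVec, dotProduct]

lemma path2_eval_zero (Q : Quiv) {d : Q.V → ℕ} (M : Rep K Q d) (a b : Q.Ar)
    (h h' : Q.t a = Q.s b) (h0 : pathEval K M (path2 a b h) = 0)
    (i : Fin (d (Q.t b))) (j : Fin (d (Q.s a))) :
    ∑ k : Fin (d (Q.t a)), M.mat b i (finCongr (congrArg d h') k) * M.mat a k j = 0 := by
  have h2 := congrFun (LinearMap.congr_fun h0 (Pi.single j (1 : K))) i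
  have h3 : pathEval K M (path2 a b h) (Pi.single j (1 : K)) i =
      arrowEval K M (⟨b, h.symm, rfl⟩ : (Q.t a : Q.V) ⟶ Q.t b)
        (arrowEval K M (⟨a, rfl, rfl⟩ : (Q.s a : Q.V) ⟶ Q.t a) (Pi.single j (1 : K))) i := by
    simp [pathEval, path2]
  rw [h3] at h2
  simp only [arrowEval_apply, Pi.single_apply, mul_ite, mul_one, mul_zero,
    Finset.sum_ite_eq', Finset.mem_univ, if_true, LinearMap.zero_apply,
    Pi.zero_apply] at h2
  rw [← h2]
  apply Finset.sum_congr rfl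
  intro k _
  congr 1

end ModuliPaper
namespace ModuliPaper

/-- Lemma 4.5.  Let `A = KQ/I` be an acyclic string algebra.
Then there is a coloring `c` of `Q` such that the induced ideal `I_c` is
contained in `I`.  In particular, `KQ/I_c` is an acyclic gentle algebra with
the same quiver and `A` is a quotient of it (so every `A`-module is a
`KQ/I_c`-module). -/
theorem acyclic_string_is_quotient_of_gentle
    (K : Type) [Field K] [IsAlgClosed K] [CharZero K]
    (Q : Quiv) (R : MonRels Q) (hstring : R.IsString) (hacyclic : Q.IsAcyclic) :
    ∃ (S : Type) (_ : Fintype S) (col : Coloring Q S),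
      (∀ a b : Q.Ar, Q.t a = Q.s b → col.c a = col.c b → R.pairIn a b) ∧
      (colorRels col).IsGentle ∧
      ∀ d : Q.V → ℕ, monModVar K R d ⊆ pairModVar K (colorRels col) d := by
  classical
  have hI := vrel_irrefl Q hacyclic
  choose mfun h1 h2 h3 h4 using fun x => exists_matching Q R hstring x
  set succ : Q.Ar → Option Q.Ar := fun a => mfun (Q.t a) a with hsuccdef
  have hsucc1 : ∀ a b, succ a = some b → Q.s b = Q.t a ∧ R.pairIn a b :=
    fun a b h => h1 (Q.t a) a b rfl h
  have hsucc : ∀ a b, succ a = some b → Q.t a = Q.s b :=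
    fun a b h => (hsucc1 a b h).1.symm
  have hsuccinj : ∀ u v b, succ u = some b → succ v = some b → u = v := by
    intro u v b hu hv
    have htu := hsucc u b hu
    have htv := hsucc v b hv
    have hu' : mfun (Q.s b) u = some b := by rw [← htu]; exact hu
    have hv' : mfun (Q.s b) v = some b := by rw [← htv]; exact hv
    exact h2 (Q.s b) u v b htu htv hu' hv'
  set pred : Q.Ar → Option Q.Ar :=
    fun b => if h : ∃ a, succ a = some b then some h.choose else none with hpreddef
  have hsp : ∀ a b, succ a = some b ↔ pred b = some a := by
    intro a b
    constructor
    · intro h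
      have hex : ∃ a, succ a = some b := ⟨a, h⟩
      have hpb : pred b = some hex.choose := dif_pos hex
      rw [hpb, hsuccinj hex.choose a b hex.choose_spec h]
    · intro h
      rw [hpreddef] at h
      dsimp only at h
      split_ifs at h with hex
      · injection h with h
        rw [← h]
        exact hex.choose_spec
  have hpred : ∀ a b, pred a = some b → Q.t b = Q.s a :=
    fun a b h => hsucc b a ((hsp b a).mpr h)
  -- the coloring
  refine ⟨Q.Ar, inferInstance,
    { c := root Q pred hpred hI
      isPath := ?_ }, ?_, ?_, ?_⟩
  · intro s
    by_cases hps : pred s = none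
    · refine ⟨chainL Q succ hsucc hI s, chain_nodup Q succ hsucc hI s, fun a => ?_,
        chain_chain' Q succ hsucc hI s⟩
      constructor
      · intro ha
        rw [chain_mem_root Q pred succ hpred hsucc hI hsp ha,
          root_none Q pred hpred hI hps]
      · intro ha
        exact mem_chain_of_root Q pred succ hpred hsucc hI hsp ha hps
    · refine ⟨[], List.nodup_nil, fun a => ?_, List.isChain_nil⟩
      constructor
      · intro ha; cases ha
      · intro ha
        exact absurd (by rw [← ha]; exact pred_root Q pred hpred hI a) hps
  all_goals {
    have hkey : ∀ a b : Q.Ar,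
        (Q.t a = Q.s b ∧ root Q pred hpred hI a = root Q pred hpred hI b) ↔
        succ a = some b := by
      intro a b
      constructor
      · rintro ⟨hcomp, hcol⟩
        have hra : pred (root Q pred hpred hI a) = none := pred_root Q pred hpred hI a
        have hma : a ∈ chainL Q succ hsucc hI (root Q pred hpred hI a) :=
          mem_chain_of_root Q pred succ hpred hsucc hI hsp rfl hra
        have hmb : b ∈ chainL Q succ hsucc hI (root Q pred hpred hI a) :=
          mem_chain_of_root Q pred succ hpred hsucc hI hsp hcol.symm hra
        exact chain_adj Q succ hsucc hI hma hmb hcomp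
      · intro h
        refine ⟨hsucc a b h, ?_⟩
        exact (root_some Q pred hpred hI ((hsp a b).mp h)).symm
    first
    | -- condition 1
      (intro a b hcomp hcol
       exact (hsucc1 a b ((hkey a b).mp ⟨hcomp, hcol⟩)).2)
    | -- gentleness
      (refine ⟨hstring.1, fun a => ⟨?_, ?_⟩, fun a => ⟨?_, ?_⟩⟩
       · intro u hu v hv
         obtain ⟨hu1, hu2⟩ := hu
         obtain ⟨hv1, hv2⟩ := hv
         have hu3 : succ a ≠ some u := fun hh => hu2 ⟨hu1, ((hkey a u).mpr hh).2⟩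
         have hv3 : succ a ≠ some v := fun hh => hv2 ⟨hv1, ((hkey a v).mpr hh).2⟩
         exact h3 (Q.t a) a rfl u ⟨hu1.symm, hu3⟩ v ⟨hv1.symm, hv3⟩
       · intro u hu v hv
         obtain ⟨hu1, hu2⟩ := hu
         obtain ⟨hv1, hv2⟩ := hv
         have hu3 : succ u ≠ some a := fun hh => hu2 ⟨hu1, ((hkey u a).mpr hh).2⟩
         have hv3 : succ v ≠ some a := fun hh => hv2 ⟨hv1, ((hkey v a).mpr hh).2⟩
         have hu4 : mfun (Q.s a) u ≠ some a := by rw [← hu1]; exact hu3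
         have hv4 : mfun (Q.s a) v ≠ some a := by rw [← hv1]; exact hv3
         exact h4 (Q.s a) a rfl u ⟨hu1, hu4⟩ v ⟨hv1, hv4⟩
       · intro u hu v hv
         have hu' := (hkey a u).mp ⟨hu.1, hu.2⟩
         have hv' := (hkey a v).mp ⟨hv.1, hv.2⟩
         rw [hu'] at hv'
         injection hv'
       · intro u hu v hv
         have hu' := (hkey u a).mp ⟨hu.1, hu.2⟩
         have hv' := (hkey v a).mp ⟨hv.1, hv.2⟩
         exact hsuccinj u v a hu' hv')
    | -- module variety inclusion
      (intro d M hM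
       intro a b hab i j
       obtain ⟨hcomp, hcol⟩ := hab
       obtain ⟨h, hmem⟩ := (hsucc1 a b ((hkey a b).mp ⟨hcomp, hcol⟩)).2
       exact path2_eval_zero K Q M a b h h (hM ⟨Q.s a, Q.t b, path2 a b h⟩ hmem) i j)
  }
end ModuliPaper
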